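/- arXiv:1204.4691 — 5 statements merged into one kernel-verified Lean document; each statement's English description precedes it below -/
import Mathlib

section
/- Let a and a' be strings that are both presuffixes of a common string z, with |a| < |a'| ≤ |z|. Then a is a presuffix of a'. -/
theorem stmt5 (z a a' : List Bool)
    (ha : a <+: z ∧ a <:+ z) (ha' : a' <+: z ∧ a' <:+ z)
    (h : a.length < a'.length) (h2 : a'.length ≤ z.length) :
    a <+: a' ∧ a <:+ a' := by
  exact ⟨List.prefix_of_prefix_length_le ha.1 ha'.1 h.le,
    List.suffix_of_suffix_length_le ha.2 ha'.2 h.le⟩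
end

section
/- Suppose a and a' are strings with a a presuffix of a' and |a'| > |a|, and let t be the periodic string (shortest period-word) of a. Then |a'| ≥ |a| + |t|. -/
def isPeriodWordOf (t a : List Bool) : Prop :=
  t ≠ [] ∧ ∀ i < a.length, a[i]? = t[i % t.length]?

def isPeriodicStringOf (t a : List Bool) : Prop :=
  isPeriodWordOf t a ∧ ∀ t', isPeriodWordOf t' a → t.length ≤ t'.length

theorem stmt6 (a a' t : List Bool) (h1 : a <+: a') (h2 : a <:+ a')
    (h3 : a'.length > a.length) (ht : isPeriodicStringOf t a) :
    a'.length ≥ a.length + t.length := by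
  obtain ⟨y, hy⟩ := h1
  obtain ⟨y', hy'⟩ := h2
  set p := a'.length - a.length with hp
  have hppos : 0 < p := Nat.sub_pos_of_lt h3
  rcases eq_or_ne a [] with ha | ha
  · subst ha
    have h1 : t.length ≤ 1 := ht.2 [true] ⟨by simp, by simp⟩
    simp only [List.length_nil, zero_add]
    omega
  have halen : 0 < a.length := List.length_pos_iff.2 ha
  have hyl : y'.length = p := by
    have := congrArg List.length hy'
    simp at this; omega
  have step : ∀ i, i + p < a.length → a[i]? = a[i + p]? := by
    intro i hi
    have e1 : a'[i + p]? = a[i]? := by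
      rw [← hy', List.getElem?_append_right (by omega)]
      congr 1; omega
    have e2 : a'[i + p]? = a[i + p]? := by
      rw [← hy, List.getElem?_append_left (by omega)]
    rw [← e2, e1]
  have key : ∀ i, i < a.length → a[i]? = a[i % p]? := by
    intro i
    induction i using Nat.strong_induction_on with
    | _ i ih =>
      intro hi
      rcases lt_or_ge i p with h | h
      · rw [Nat.mod_eq_of_lt h]
      · have hi' : i - p < a.length := by omega
        have hstep := step (i - p) (by omega)
        rw [Nat.sub_add_cancel h] at hstep
        have hm : (i - p) % p = i % p := by
          conv_rhs => rw [← Nat.sub_add_cancel h]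
          rw [Nat.add_mod_right]
        rw [← hstep, ih (i - p) (by omega) hi', hm]
  by_contra hcon
  push_neg at hcon
  have hpt : p < t.length := by omega
  have htlea : t.length ≤ a.length := by
    refine ht.2 a ⟨ha, ?_⟩
    intro i hi
    rw [Nat.mod_eq_of_lt hi]
  have hpa : p < a.length := by omega
  have hper : isPeriodWordOf (a.take p) a := by
    constructor
    · simp only [ne_eq, List.take_eq_nil_iff]
      push_neg
      exact ⟨by omega, ha⟩
    · intro i hi
      rw [key i hi]
      rw [List.length_take, Nat.min_eq_left (by omega)]
      rw [List.getElem?_take, if_pos (Nat.mod_lt _ hppos)]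
  have hle := ht.2 _ hper
  rw [List.length_take] at hle
  omega
end

section
/- Suppose z' = u t^j a = t^h a w where t, a, u, w are strings, u is nonempty, j is the largest integer such that z' has suffix t^j a, and h is the largest integer such that z' has prefix t^h a. If h > j, then |u| > |t|. -/
/-- `rep t n` is the `n`-fold concatenation `t^n`. -/
def rep (t : List Bool) (n : ℕ) : List Bool := (List.replicate n t).flatten

theorem stmt9 (z' t a u w : List Bool) (j h : ℕ)
    (h1 : z' = u ++ rep t j ++ a) (h2 : z' = rep t h ++ a ++ w)
    (hu : u ≠ [])
    (hjmax : ∀ j', (rep t j' ++ a) <:+ z' → j' ≤ j)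
    (hhmax : ∀ h', (rep t h' ++ a) <+: z' → h' ≤ h)
    (hhj : h > j) : u.length > t.length := by
  have hrep : ∀ n, (rep t n).length = n * t.length := by
    intro n
    simp [rep, List.length_flatten, List.map_replicate, List.sum_replicate, smul_eq_mul]
  have hw : w ≠ [] := by
    intro hwe
    subst hwe
    have : (rep t h ++ a) <:+ z' := by
      rw [h2]; simp
    exact absurd (hjmax h this) (by omega)
  have hwl : 1 ≤ w.length := List.length_pos_iff.mpr hw
  have hul : 1 ≤ u.length := List.length_pos_iff.mpr hu
  have hlen : u.length + j * t.length + a.length = h * t.length + a.length + w.length := by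
    have := congrArg List.length (h1 ▸ h2)
    simp [hrep] at this; omega
  have hmul : (j + 1) * t.length ≤ h * t.length :=
    Nat.mul_le_mul_right _ (by omega)
  have : (j + 1) * t.length = j * t.length + t.length := by ring
  omega
end

section
/- Suppose z' = u t^j a = t^j a w where u, w are nonempty, t is the periodic string of a (and a prefix of z'), and j is the largest integer such that z' = y t^j a for some y. Then |u| ≠ |t|; moreover if |u| < |t| then a has a period of length at most |u| < |t|, a contradiction, so |u| > |t|. -/
theorem stmt10 (z' t a u w : List Bool) (j : ℕ)
    (h1 : z' = u ++ rep t j ++ a) (h2 : z' = rep t j ++ a ++ w)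
    (hu : u ≠ []) (hw : w ≠ [])
    (ht : isPeriodicStringOf t a) (htz : t <+: z')
    (hjmax : ∀ (j' : ℕ) (y : List Bool), z' = y ++ rep t j' ++ a → j' ≤ j) :
    u.length ≠ t.length ∧ u.length > t.length := by
  obtain ⟨⟨htne, hpw⟩, hmin⟩ := ht
  set s : List Bool := rep t j ++ a with hs
  have hz1 : z' = u ++ s := by rw [h1, hs, List.append_assoc]
  have hz2 : z' = s ++ w := h2
  set p := u.length with hp
  have hp0 : 0 < p := List.length_pos_iff.mpr hu
  have ht0 : 0 < t.length := List.length_pos_iff.mpr htne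
  -- s has period p
  have hper : ∀ i, i + p < s.length → s[i + p]? = s[i]? := by
    intro i hi
    have e1 : s[i + p]? = z'[i + p]? := by
      rw [hz2, List.getElem?_append_left hi]
    have e2 : z'[i + p]? = s[i]? := by
      rw [hz1, List.getElem?_append_right (by omega)]
      congr 1
      omega
    rw [e1, e2]
  -- a has period p
  have ha : ∀ k, p ≤ k → k < a.length → a[k]? = a[k - p]? := by
    intro k hk1 hk2
    set L := (rep t j).length with hL
    have hsl : s.length = L + a.length := by simp [hs, hL]
    have e1 : a[k]? = s[L + k]? := by
      rw [hs, List.getElem?_append_right (by omega)]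
      congr 1
      omega
    have e2 : s[L + k]? = s[L + k - p]? := by
      have := hper (L + k - p) (by omega)
      rw [← this]
      congr 1
      omega
    have e3 : s[L + k - p]? = a[k - p]? := by
      rw [hs, List.getElem?_append_right (by omega)]
      congr 1
      omega
    rw [e1, e2, e3]
  have hgt : u.length > t.length := by
    rcases lt_trichotomy p t.length with hlt | heq | hgt
    · -- case |u| < |t| : contradiction with minimality
      exfalso
      rcases le_or_gt a.length p with hal | hal
      · -- a is short
        rcases eq_or_ne a [] with hae | hae
        · -- a empty: [true] is a period word
          have : t.length ≤ 1 := hmin [true] ⟨by simp, by simp [hae]⟩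
          omega
        · have : t.length ≤ a.length := hmin a ⟨hae, fun i hi => by
            rw [Nat.mod_eq_of_lt hi]⟩
          omega
      · -- a long: a.take p is a period word
        have hmod : ∀ i, i < a.length → a[i]? = a[i % p]? := by
          intro i
          induction i using Nat.strong_induction_on with
          | _ i ih =>
            intro hi
            rcases lt_or_ge i p with h | h
            · rw [Nat.mod_eq_of_lt h]
            · rw [ha i h hi, ih (i - p) (by omega) (by omega),
                ← Nat.mod_eq_sub_mod h]
        have hlen : (a.take p).length = p := by
          simp [Nat.min_def]; omega
        have : t.length ≤ (a.take p).length := by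
          apply hmin
          refine ⟨by simp [← List.length_pos_iff]; omega, fun i hi => ?_⟩
          rw [hlen, hmod i hi, List.getElem?_take_of_lt (Nat.mod_lt _ hp0)]
        omega
    · -- case |u| = |t| : u = t, contradict maximality of j
      exfalso
      have hup : u <+: z' := ⟨s, hz1.symm⟩
      have hut : u = t := by
        rcases List.prefix_of_prefix_length_le hup htz (by omega) with h
        exact h.eq_of_length heq
      have hrep : rep t (j + 1) = t ++ rep t j := by
        simp [rep, List.replicate_succ]
      have : z' = [] ++ rep t (j + 1) ++ a := by
        simp [hrep, h1, hut, List.append_assoc]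
      have := hjmax (j + 1) [] this
      omega
    · exact hgt
  exact ⟨ne_of_gt hgt, hgt⟩
end

section
/- Let v be a presuffix of a string z with |z| > N/2 where z is a substring of a string x of length N sharing two overlapping occurrences, and suppose v has periodic string t and v = t^{m'} y with m' > 0 and |y| < |t|. If a = t b (with |b| < |t|, b a prefix of t) is also a suffix of z, then y = b; i.e., the 'remainder' of v modulo its period t must equal the remainder b of a. -/
def occursAt (z x : List Bool) (i : ℕ) : Prop :=
  i + z.length ≤ x.length ∧ (x.drop i).take z.length = z

/-- If `t` admits a nontrivial cyclic shift by `k`, then `t.take (gcd k |t|)` is a shorter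
period word of anything `t` is a minimal period word of: contradiction. -/
lemma shift_contra (t a : List Bool) (k : ℕ) (hk : k % t.length ≠ 0)
    (hshift : ∀ r < t.length, t[r]? = t[(k + r) % t.length]?)
    (hta : isPeriodicStringOf t a) : False := by
  have hT0 : 0 < t.length := List.length_pos_iff.2 hta.1.1
  -- iterate the shift
  have hiter : ∀ n : ℕ, ∀ r < t.length, t[r]? = t[(n * k + r) % t.length]? := by
    intro n
    induction n with
    | zero => intro r hr; simp [Nat.mod_eq_of_lt hr]
    | succ n ih =>
      intro r hr
      have h1 := ih r hr
      have h2 := hshift ((n * k + r) % t.length) (Nat.mod_lt _ hT0)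
      have h3 : (k + (n * k + r) % t.length) % t.length
          = ((n + 1) * k + r) % t.length := by
        rw [Nat.add_mod_mod]; congr 1; ring
      rw [h1, h2, h3]
  set g := Nat.gcd k t.length with hg
  have hg0 : 0 < g := Nat.gcd_pos_of_pos_right _ hT0
  have hgT : g ∣ t.length := Nat.gcd_dvd_right _ _
  have hglt : g < t.length := by
    rcases (Nat.le_of_dvd hT0 hgT).lt_or_eq with h | h
    · exact h
    · exfalso
      have hdvd : t.length ∣ k := h ▸ Nat.gcd_dvd_left k t.length
      obtain ⟨c, rfl⟩ := hdvd
      exact hk (Nat.mul_mod_right _ _)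
  -- Bezout: ∃ n, (n * k) % t.length = g
  obtain ⟨n, hn⟩ : ∃ n : ℕ, (n * k) % t.length = g := by
    have hbez : (g : ℤ) = k * Nat.gcdA k t.length + t.length * Nat.gcdB k t.length :=
      Nat.gcd_eq_gcd_ab k t.length
    set A := Nat.gcdA k t.length with hA
    refine ⟨((A % t.length).toNat), ?_⟩
    have hTz : (t.length : ℤ) ≠ 0 := by exact_mod_cast hT0.ne'
    have hnn : (0 : ℤ) ≤ A % t.length := Int.emod_nonneg _ hTz
    have hmod : (((A % t.length).toNat : ℤ)) = A % t.length := Int.toNat_of_nonneg hnn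
    have hz : (((A % (t.length : ℤ)).toNat * k : ℕ) : ℤ) % t.length = (g : ℤ) % t.length := by
      push_cast
      rw [hmod, Int.mul_emod, Int.emod_emod_of_dvd _ dvd_rfl, ← Int.mul_emod, mul_comm,
        hbez, Int.add_mul_emod_self_left]
    have hz2 : ((((A % (t.length : ℤ)).toNat * k) % t.length : ℕ) : ℤ)
        = ((g % t.length : ℕ) : ℤ) := by push_cast; exact hz
    have hz3 : ((A % (t.length : ℤ)).toNat * k) % t.length = g % t.length := by
      exact_mod_cast hz2
    rw [Nat.mod_eq_of_lt hglt] at hz3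
    exact hz3
  have hshiftg : ∀ r < t.length, t[r]? = t[(g + r) % t.length]? := by
    intro r hr
    rw [hiter n r hr]
    congr 1
    rw [← Nat.mod_add_mod, hn]
  -- t[m] = t[m % g]
  have hmodg : ∀ m, m < t.length → t[m]? = t[m % g]? := by
    intro m
    induction m using Nat.strong_induction_on with
    | _ m ih =>
      intro hm
      by_cases hlt : m < g
      · rw [Nat.mod_eq_of_lt hlt]
      · push_neg at hlt
        have hr : m - g < t.length := lt_of_le_of_lt (Nat.sub_le _ _) hm
        have h1 := hshiftg (m - g) hr
        rw [Nat.add_sub_cancel' hlt, Nat.mod_eq_of_lt hm] at h1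
        rw [← h1, ih (m - g) (by omega) hr]
        congr 1
        conv_rhs => rw [show m = m - g + g by omega]
        rw [Nat.add_mod_right]
  have hlen' : (t.take g).length = g := by
    rw [List.length_take]; omega
  -- t.take g is a period word of a
  have hpw : isPeriodWordOf (t.take g) a := by
    constructor
    · intro h
      have := congrArg List.length h
      rw [hlen'] at this
      simp at this
      omega
    · intro i hi
      have h1 := hta.1.2 i hi
      have h2 : t[i % t.length]? = t[i % g]? := by
        rw [hmodg _ (Nat.mod_lt _ hT0), Nat.mod_mod_of_dvd _ hgT]
      rw [h1, h2, hlen', List.getElem?_take_of_lt (Nat.mod_lt i hg0)]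
  have hge := hta.2 _ hpw
  rw [hlen'] at hge
  omega

theorem stmt12 (N : ℕ) (x z v t y a b : List Bool) (m' i j : ℕ)
    (hx : x.length = N) (hz : 2 * z.length > N)
    (hi : occursAt z x i) (hj : occursAt z x j) (hij : i ≠ j)
    (hv : v <+: z ∧ v <:+ z)
    (htv : isPeriodicStringOf t v)
    (hvty : v = rep t m' ++ y) (hm' : 0 < m') (hyt : y.length < t.length)
    (hab : a = t ++ b) (hbt : b.length < t.length) (hbpre : b <+: t)
    (ha : a <:+ z) (hta : isPeriodicStringOf t a) :
    y = b := by
  have hT0 : 0 < t.length := List.length_pos_iff.2 hta.1.1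
  have hrepl : (rep t m').length = m' * t.length := by
    simp [rep, List.length_flatten, List.map_replicate, List.sum_replicate, smul_eq_mul,
      mul_comm]
  have hvlen : v.length = m' * t.length + y.length := by
    rw [hvty]; simp [hrepl]
  have halen : a.length = t.length + b.length := by rw [hab]; simp
  have hvs : v <:+ z := hv.2
  -- first show lengths equal, then conclude
  have hlen : y.length = b.length := by
    by_contra hne
    rcases le_or_gt a.length v.length with hle | hlt
    · -- a is a suffix of v
      obtain ⟨s, hs⟩ := List.suffix_of_suffix_length_le ha hvs hle
      have hkv : s.length + a.length = v.length := by
        rw [← hs]; simp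
      have hshift : ∀ r < t.length, t[r]? = t[(s.length + r) % t.length]? := by
        intro r hr
        have hra : r < a.length := by omega
        have h1 : a[r]? = t[r]? := by
          rw [hta.1.2 r hra]; congr 1; exact Nat.mod_eq_of_lt hr
        have h2 := htv.1.2 (s.length + r) (by omega)
        have h3 : v[s.length + r]? = a[r]? := by
          rw [← hs, List.getElem?_append_right (by omega)]
          congr 1; omega
        rw [← h1, ← h3, h2]
      have hkmod : s.length % t.length ≠ 0 := by
        intro h0
        have hthis : (s.length + a.length) % t.length = v.length % t.length := by rw [hkv]
        rw [halen, hvlen] at hthis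
        have e1 : (s.length + (t.length + b.length)) % t.length = b.length % t.length := by
          rw [← Nat.mod_add_mod, h0, Nat.zero_add, Nat.add_mod_left]
        have e2 : (m' * t.length + y.length) % t.length = y.length % t.length := by
          rw [Nat.add_mod, Nat.mul_mod_left, Nat.zero_add, Nat.mod_mod_of_dvd _ dvd_rfl]
        have : b.length % t.length = y.length % t.length := by
          rw [← e1, hthis, e2]
        rw [Nat.mod_eq_of_lt hbt, Nat.mod_eq_of_lt hyt] at this
        exact hne this.symm
      exact shift_contra t a s.length hkmod hshift hta
    · -- v is a suffix of a
      obtain ⟨s, hs⟩ := List.suffix_of_suffix_length_le hvs ha (le_of_lt hlt)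
      have hkv : s.length + v.length = a.length := by
        rw [← hs]; simp
      have hvT : t.length ≤ v.length := by
        have : 1 * t.length ≤ m' * t.length := Nat.mul_le_mul_right _ hm'
        omega
      have hshift : ∀ r < t.length, t[r]? = t[(s.length + r) % t.length]? := by
        intro r hr
        have hrv : r < v.length := by omega
        have h1 : v[r]? = t[r]? := by
          rw [htv.1.2 r hrv]; congr 1; exact Nat.mod_eq_of_lt hr
        have h2 := hta.1.2 (s.length + r) (by omega)
        have h3 : a[s.length + r]? = v[r]? := by
          rw [← hs, List.getElem?_append_right (by omega)]
          congr 1; omega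
        rw [← h1, ← h3, h2]
      have hkmod : s.length % t.length ≠ 0 := by
        intro h0
        have hthis : (s.length + v.length) % t.length = a.length % t.length := by rw [hkv]
        rw [halen, hvlen] at hthis
        have e1 : (s.length + (m' * t.length + y.length)) % t.length
            = y.length % t.length := by
          rw [← Nat.mod_add_mod, h0, Nat.zero_add, Nat.add_mod, Nat.mul_mod_left,
            Nat.zero_add, Nat.mod_mod_of_dvd _ dvd_rfl]
        have e2 : (t.length + b.length) % t.length = b.length % t.length := by
          rw [Nat.add_mod_left]
        have : y.length % t.length = b.length % t.length := by
          rw [← e1, hthis, e2]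
        rw [Nat.mod_eq_of_lt hbt, Nat.mod_eq_of_lt hyt] at this
        exact hne this
      exact shift_contra t a s.length hkmod hshift hta
  -- y and b are equal-length suffixes of z, hence equal
  have hys : y <:+ z := (show y <:+ v from ⟨rep t m', hvty.symm⟩).trans hvs
  have hbs : b <:+ z := (show b <:+ a from ⟨t, hab.symm⟩).trans ha
  obtain ⟨s1, hs1⟩ := hys
  obtain ⟨s2, hs2⟩ := hbs
  have hl : s1.length = s2.length := by
    have e1 := congrArg List.length hs1
    have e2 := congrArg List.length hs2
    simp at e1 e2
    omega
  exact (List.append_inj (hs1.trans hs2.symm) hl).2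
end
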